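/- Let n ≥ 1, let Δ ⊆ ℝⁿ be the standard simplex, let α > 1, and let z ∈ ℝⁿ. Then there exists a threshold τ ∈ ℝ such that the vector p* defined coordinatewise by p*_y := [ (α−1)·(z_y − τ) ]₊^{1/(α−1)} (where [t]₊ := max(t, 0)) lies in Δ and is the unique maximizer over Δ of p ↦ ⟨z, p⟩ − (1/(α(α−1)))·(Σ_y p_y^α − 1). -/

import Mathlib

/-- 1D strict optimality: `s = [(α-1)a]₊^{1/(α-1)}` strictly maximizes
`t ↦ a·t - (α(α-1))⁻¹·t^α` over `t ≥ 0`. -/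
lemma entmax_key (α : ℝ) (hα : 1 < α) (a t : ℝ) (ht : 0 ≤ t)
    (s : ℝ) (hs : s = (max ((α - 1) * a) 0) ^ (1 / (α - 1))) (hts : t ≠ s) :
    a * t - (α * (α - 1))⁻¹ * t ^ α < a * s - (α * (α - 1))⁻¹ * s ^ α := by
  have hβ : 0 < α - 1 := by linarith
  have hαpos : 0 < α := by linarith
  have hcpos : 0 < (α * (α - 1))⁻¹ := by positivity
  rcases le_or_gt ((α - 1) * a) 0 with hle | hpos
  · -- s = 0, a ≤ 0
    have hs0 : s = 0 := by
      rw [hs, max_eq_right hle, Real.zero_rpow (by positivity : (1:ℝ)/(α-1) ≠ 0)]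
    have ha : a ≤ 0 := by nlinarith
    have ht0 : 0 < t := lt_of_le_of_ne ht (by rw [hs0] at hts; exact Ne.symm hts)
    have htα : 0 < t ^ α := Real.rpow_pos_of_pos ht0 α
    have hsα : (0:ℝ) ^ α = 0 := Real.zero_rpow (ne_of_gt hαpos)
    rw [hs0, hsα]
    nlinarith [mul_nonpos_of_nonpos_of_nonneg ha ht, mul_pos hcpos htα]
  · -- s > 0 case
    have hspos : 0 < s := by
      rw [hs, max_eq_left hpos.le]
      exact Real.rpow_pos_of_pos hpos _
    have hsβ : s ^ (α - 1) = (α - 1) * a := by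
      rw [hs, max_eq_left hpos.le, one_div, Real.rpow_inv_rpow hpos.le (ne_of_gt hβ)]
    have hsαpos : 0 < s ^ α := Real.rpow_pos_of_pos hspos α
    -- Bernoulli's inequality
    have hx : -1 ≤ t / s - 1 := by
      have : 0 ≤ t / s := div_nonneg ht hspos.le
      linarith
    have hx' : t / s - 1 ≠ 0 := by
      intro h
      have : t / s = 1 := by linarith
      exact hts ((div_eq_one_iff_eq (ne_of_gt hspos)).mp this)
    have hb := one_add_mul_self_lt_rpow_one_add hx hx' hα
    have e1 : (1 : ℝ) + (t / s - 1) = t / s := by ring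
    rw [e1] at hb
    have e2 : (t / s) ^ α = t ^ α / s ^ α := Real.div_rpow ht hspos.le α
    have h5 : s ^ α * (1 + α * (t / s - 1)) < s ^ α * ((t / s) ^ α) :=
      mul_lt_mul_of_pos_left hb hsαpos
    have h6 : s ^ α * ((t / s) ^ α) = t ^ α := by
      rw [e2]; field_simp
    have hsplit : s ^ α = s ^ (α - 1) * s := by
      nth_rewrite 1 [show α = (α - 1) + 1 by ring]
      rw [Real.rpow_add_one (ne_of_gt hspos)]
    have h7 : s ^ α * (1 + α * (t / s - 1)) = s ^ α + α * ((α - 1) * a) * (t - s) := by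
      rw [hsplit, hsβ]
      field_simp
    have hmain : s ^ α + α * ((α - 1) * a) * (t - s) < t ^ α := by
      rw [← h7, ← h6]; exact h5
    have h3 : (α * (α - 1))⁻¹ * (s ^ α + α * ((α - 1) * a) * (t - s))
        < (α * (α - 1))⁻¹ * t ^ α := mul_lt_mul_of_pos_left hmain hcpos
    have h4 : (α * (α - 1))⁻¹ * (s ^ α + α * ((α - 1) * a) * (t - s))
        = (α * (α - 1))⁻¹ * s ^ α + a * (t - s) := by
      field_simp
    linarith [h3, h4.symm.le]

/-- Existence of the threshold `τ` normalizing the entmax output, by the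
intermediate value theorem. -/
lemma entmax_tau (n : ℕ) (hn : 1 ≤ n) (α : ℝ) (hα : 1 < α) (z : Fin n → ℝ) :
    ∃ τ : ℝ, ∑ y, (max ((α - 1) * (z y - τ)) 0) ^ (1 / (α - 1)) = 1 := by
  have hβ : 0 < α - 1 := by linarith
  have hne : (Finset.univ : Finset (Fin n)).Nonempty :=
    @Finset.univ_nonempty _ _ (Fin.pos_iff_nonempty.mp hn)
  set S : ℝ → ℝ := fun τ => ∑ y, (max ((α - 1) * (z y - τ)) 0) ^ (1 / (α - 1)) with hS
  have hcont : Continuous S := by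
    apply continuous_finset_sum
    intro y _
    have h1 : Continuous fun τ : ℝ => max ((α - 1) * (z y - τ)) 0 := by fun_prop
    have h2 : Continuous fun x : ℝ => x ^ (1 / (α - 1)) := by
      rw [continuous_iff_continuousAt]
      intro x
      exact Real.continuousAt_rpow_const x _ (Or.inr (by positivity))
    exact h2.comp h1
  set y0 : Fin n := ⟨0, hn⟩
  set τ₁ : ℝ := z y0 - 1 / (α - 1) with hτ₁
  set τ₀ : ℝ := Finset.univ.sup' hne z with hτ₀
  have hS0 : S τ₀ = 0 := by
    apply Finset.sum_eq_zero
    intro y _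
    have hy : z y ≤ τ₀ := Finset.le_sup' z (Finset.mem_univ y)
    rw [max_eq_right (by nlinarith), Real.zero_rpow (by positivity)]
  have hS1 : 1 ≤ S τ₁ := by
    have h1 : (max ((α - 1) * (z y0 - τ₁)) 0) ^ (1 / (α - 1)) = 1 := by
      have : (α - 1) * (z y0 - τ₁) = 1 := by
        rw [hτ₁]; field_simp; ring
      rw [this, max_eq_left (by norm_num), Real.one_rpow]
    calc (1:ℝ) = (max ((α - 1) * (z y0 - τ₁)) 0) ^ (1 / (α - 1)) := h1.symm
      _ ≤ S τ₁ := Finset.single_le_sum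
          (f := fun y => (max ((α - 1) * (z y - τ₁)) 0) ^ (1 / (α - 1)))
          (fun y _ => Real.rpow_nonneg (le_max_right _ _) _) (Finset.mem_univ y0)
  have hle : τ₁ ≤ τ₀ := by
    have : z y0 ≤ τ₀ := Finset.le_sup' z (Finset.mem_univ y0)
    rw [hτ₁]
    have : 0 < 1 / (α - 1) := by positivity
    linarith
  have := intermediate_value_Icc' hle hcont.continuousOn
  have hmem : (1:ℝ) ∈ Set.Icc (S τ₀) (S τ₁) := ⟨by rw [hS0]; norm_num, hS1⟩
  obtain ⟨τ, _, hτ⟩ := this hmem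
  exact ⟨τ, hτ⟩

/-- The α-entmax transformation (Equation 4 of the paper): for α > 1
there is a threshold τ such that p*_y = [(α-1)(z_y - τ)]₊^{1/(α-1)} lies in the
simplex and is the unique maximizer of p ↦ ⟨z,p⟩ - Ω_α(p) over the simplex. -/
theorem entmax_threshold_form
    (n : ℕ) (hn : 1 ≤ n) (α : ℝ) (hα : 1 < α) (z : Fin n → ℝ) :
    ∃ τ : ℝ, ∃ pstar : Fin n → ℝ,
      (∀ y, pstar y = (max ((α - 1) * (z y - τ)) 0) ^ (1 / (α - 1))) ∧
      pstar ∈ stdSimplex ℝ (Fin n) ∧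
      (∀ p ∈ stdSimplex ℝ (Fin n),
        (∑ y, z y * p y) - (α * (α - 1))⁻¹ * ((∑ y, p y ^ α) - 1)
          ≤ (∑ y, z y * pstar y) - (α * (α - 1))⁻¹ * ((∑ y, pstar y ^ α) - 1)) ∧
      (∀ p ∈ stdSimplex ℝ (Fin n), p ≠ pstar →
        (∑ y, z y * p y) - (α * (α - 1))⁻¹ * ((∑ y, p y ^ α) - 1)
          < (∑ y, z y * pstar y) - (α * (α - 1))⁻¹ * ((∑ y, pstar y ^ α) - 1)) := by
  obtain ⟨τ, hτ⟩ := entmax_tau n hn α hα z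
  set pstar : Fin n → ℝ := fun y => (max ((α - 1) * (z y - τ)) 0) ^ (1 / (α - 1)) with hps
  have hps_def : ∀ y, pstar y = (max ((α - 1) * (z y - τ)) 0) ^ (1 / (α - 1)) :=
    fun y => rfl
  have hps_nonneg : ∀ y, 0 ≤ pstar y :=
    fun y => Real.rpow_nonneg (le_max_right _ _) _
  have hps_sum : ∑ y, pstar y = 1 := hτ
  have hps_mem : pstar ∈ stdSimplex ℝ (Fin n) := ⟨hps_nonneg, hps_sum⟩
  -- rewriting of the objective
  have expand : ∀ p : Fin n → ℝ, (∑ y, p y) = 1 →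
      (∑ y, z y * p y) - (α * (α - 1))⁻¹ * ((∑ y, p y ^ α) - 1)
        = (∑ y, ((z y - τ) * p y - (α * (α - 1))⁻¹ * p y ^ α)) + τ + (α * (α - 1))⁻¹ := by
    intro p hp
    have h1 : ∑ y, ((z y - τ) * p y - (α * (α - 1))⁻¹ * p y ^ α)
        = (∑ y, z y * p y) - τ * (∑ y, p y) - (α * (α - 1))⁻¹ * (∑ y, p y ^ α) := by
      rw [Finset.mul_sum, Finset.mul_sum, ← Finset.sum_sub_distrib, ← Finset.sum_sub_distrib]
      apply Finset.sum_congr rfl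
      intro y _
      ring
    rw [h1, hp]
    ring
  -- strict coordinatewise optimality
  have hkey : ∀ (y : Fin n) (t : ℝ), 0 ≤ t → t ≠ pstar y →
      (z y - τ) * t - (α * (α - 1))⁻¹ * t ^ α
        < (z y - τ) * pstar y - (α * (α - 1))⁻¹ * (pstar y) ^ α := by
    intro y t ht hne
    exact entmax_key α hα (z y - τ) t ht (pstar y) (hps_def y) hne
  have hkey_le : ∀ (y : Fin n) (t : ℝ), 0 ≤ t →
      (z y - τ) * t - (α * (α - 1))⁻¹ * t ^ α
        ≤ (z y - τ) * pstar y - (α * (α - 1))⁻¹ * (pstar y) ^ α := by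
    intro y t ht
    rcases eq_or_ne t (pstar y) with h | h
    · rw [h]
    · exact (hkey y t ht h).le
  refine ⟨τ, pstar, hps_def, hps_mem, ?_, ?_⟩
  · intro p hp
    rw [expand p hp.2, expand pstar hps_sum]
    have : (∑ y, ((z y - τ) * p y - (α * (α - 1))⁻¹ * p y ^ α))
        ≤ ∑ y, ((z y - τ) * pstar y - (α * (α - 1))⁻¹ * (pstar y) ^ α) :=
      Finset.sum_le_sum (fun y _ => hkey_le y (p y) (hp.1 y))
    linarith
  · intro p hp hne
    rw [expand p hp.2, expand pstar hps_sum]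
    obtain ⟨y0, hy0⟩ := Function.ne_iff.mp hne
    have : (∑ y, ((z y - τ) * p y - (α * (α - 1))⁻¹ * p y ^ α))
        < ∑ y, ((z y - τ) * pstar y - (α * (α - 1))⁻¹ * (pstar y) ^ α) :=
      Finset.sum_lt_sum (fun y _ => hkey_le y (p y) (hp.1 y))
        ⟨y0, Finset.mem_univ y0, hkey y0 (p y0) (hp.1 y0) hy0⟩
    linarith
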